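/- arXiv:1608.07600 — 3 statements merged into one kernel-verified Lean document; each statement's English description precedes it below -/
import Mathlib

section
/- Let (R, m) be a Noetherian local ring, I an ideal of R, and x an element of R such that dim R/(I + (x)) = dim R/I - 1 (i.e., x is a parameter modulo I and dim R/I = 1 means the quotients below are finite length). Assume R/(I,x) has finite length. Then for every n ≥ 1, (1/n)·length(R/(I, x^n)) ≥ (1/(n+1))·length(R/(I, x^{n+1})). -/
open Filter IsLocalRing

noncomputable section

variable {R : Type*} [CommRing R]

/-- The `q`-th Frobenius power `I^{[q]}` of an ideal `I`. -/
def fpow (I : Ideal R) (q : ℕ) : Ideal R := Ideal.span ((fun x => x ^ q) '' (I : Set R))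

/-- The length of `R ⧸ I` as an `R`-module, as a natural number. -/
def qlen (I : Ideal R) : ℕ := ((Order.krullDim (Submodule R (R ⧸ I))).unbotD 0).toNat

/-- The length of `R ⧸ I` as an `R`-module, in `ℕ∞`. -/
def lenE (I : Ideal R) : ℕ∞ := (Order.krullDim (Submodule R (R ⧸ I))).unbotD 0

/-- The tight closure `I*` of an ideal `I` in a ring of characteristic `p`. -/
def tightClosure (p : ℕ) (I : Ideal R) : Ideal R :=
  Ideal.span {x | ∃ c : R, (∀ P ∈ minimalPrimes R, c ∉ P) ∧
    ∃ e₀ : ℕ, ∀ e ≥ e₀, c * x ^ p ^ e ∈ fpow I (p ^ e)}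

/-- `c` is a test element: `c` avoids all minimal primes and for every ideal `I`,
`x ∈ I*` iff `c x^q ∈ I^{[q]}` for all `q = p^e`. -/
def IsTestElement (p : ℕ) (c : R) : Prop :=
  (∀ P ∈ minimalPrimes R, c ∉ P) ∧
    ∀ (I : Ideal R) (x : R), x ∈ tightClosure p I ↔ ∀ e : ℕ, c * x ^ p ^ e ∈ fpow I (p ^ e)

end


noncomputable def mLen (R M : Type*) [Ring R] [AddCommGroup M] [Module R M] : ℕ∞ :=
  Order.height (⊤ : Submodule R M)

section
variable {R M N : Type*} [Ring R] [AddCommGroup M] [Module R M] [AddCommGroup N] [Module R N]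

lemma mLen_congr (e : M ≃ₗ[R] N) : mLen R M = mLen R N := by
  have h := Order.height_orderIso (Submodule.orderIsoMapComap e) (⊤ : Submodule R M)
  unfold mLen
  rw [← h]
  congr 1
  simp [Submodule.orderIsoMapComap]

lemma mLen_le_of_surjective (f : M →ₗ[R] N) (hf : Function.Surjective f) :
    mLen R N ≤ mLen R M := by
  have hsm : StrictMono (Submodule.comap f) :=
    Monotone.strictMono_of_injective (fun _ _ h => Submodule.comap_mono h) (Submodule.comap_injective_of_surjective hf)
  have := Order.height_le_height_apply_of_strictMono _ hsm (⊤ : Submodule R N)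
  simpa [mLen, Submodule.comap_top] using this

lemma mLen_submodule_le (P : Submodule R M) : mLen R P ≤ mLen R M := by
  have hsm : StrictMono (Submodule.map P.subtype) :=
    Monotone.strictMono_of_injective (fun _ _ h => Submodule.map_mono h)
      (Submodule.map_injective_of_injective P.injective_subtype)
  have h1 := Order.height_le_height_apply_of_strictMono _ hsm (⊤ : Submodule R P)
  exact h1.trans (Order.height_mono le_top)

lemma mLen_quotient_le (P : Submodule R M) : mLen R (M ⧸ P) ≤ mLen R M :=
  mLen_le_of_surjective P.mkQ (Submodule.mkQ_surjective P)

lemma mLen_subsingleton [Subsingleton M] : mLen R M = 0 := by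
  rw [mLen, Order.height_eq_zero]
  intro b _
  exact le_of_eq (Subsingleton.elim _ _)

lemma mLen_simple [IsSimpleModule R M] : mLen R M ≤ 1 := by
  apply Order.height_le
  intro p hp
  by_contra hc
  push_neg at hc
  have h2 : 2 ≤ p.length := by
    by_contra h
    push_neg at h
    interval_cases hl : p.length <;> simp_all <;> exact hc (by norm_num)
  have h01 : p ⟨0, by omega⟩ < p ⟨1, by omega⟩ := p.strictMono (by simp [Fin.lt_def])
  have h12 : p ⟨1, by omega⟩ < p ⟨2, by omega⟩ := p.strictMono (by simp [Fin.lt_def])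
  rcases eq_bot_or_eq_top (p ⟨1, by omega⟩) with h | h
  · rw [h] at h01; exact (not_lt_bot h01)
  · rw [h] at h12; exact (not_top_lt h12)
end


lemma ltseries_prod_le {β γ : Type*} [Preorder β] [Preorder γ] (p : LTSeries (β × γ)) :
    (p.length : ℕ∞) ≤ Order.height p.last.1 + Order.height p.last.2 := by
  suffices h : ∀ (n : ℕ) (p : LTSeries (β × γ)), p.length = n →
      (p.length : ℕ∞) ≤ Order.height p.last.1 + Order.height p.last.2 from h p.length p rfl
  intro n
  induction n with
  | zero => intro p hn; rw [hn]; simp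
  | succ n ih =>
    intro p hn
    rw [hn]
    have hne : p.length ≠ 0 := by omega
    have hlt : p.eraseLast.last < p.last := p.eraseLast_last_rel_last hne
    have hlen : p.eraseLast.length = n := by simp [RelSeries.eraseLast, hn]
    have hih := ih p.eraseLast hlen
    rw [hlen] at hih
    rcases eq_or_ne (Order.height p.last.1) ⊤ with h1 | h1
    · rw [h1, top_add]; exact le_top
    rcases eq_or_ne (Order.height p.last.2) ⊤ with h2 | h2
    · rw [h2, add_top]; exact le_top
    have hm1 : Order.height p.eraseLast.last.1 ≤ Order.height p.last.1 :=
      Order.height_mono hlt.le.1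
    have hm2 : Order.height p.eraseLast.last.2 ≤ Order.height p.last.2 :=
      Order.height_mono hlt.le.2
    rcases Prod.lt_iff.mp hlt with ⟨hs, hw⟩ | ⟨hw, hs⟩
    · have hstrict : Order.height p.eraseLast.last.1 < Order.height p.last.1 :=
        Order.height_strictMono hs (hm1.trans_lt (lt_top_iff_ne_top.mpr h1))
      have : Order.height p.eraseLast.last.1 + 1 ≤ Order.height p.last.1 :=
        ENat.add_one_le_iff (ne_top_of_lt hstrict) |>.mpr hstrict
      calc ((n + 1 : ℕ) : ℕ∞) = (n : ℕ∞) + 1 := by push_cast; ring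
        _ ≤ (Order.height p.eraseLast.last.1 + Order.height p.eraseLast.last.2) + 1 := by
            exact add_le_add_left hih 1
        _ = (Order.height p.eraseLast.last.1 + 1) + Order.height p.eraseLast.last.2 := by ring
        _ ≤ Order.height p.last.1 + Order.height p.last.2 := add_le_add this hm2
    · have hstrict : Order.height p.eraseLast.last.2 < Order.height p.last.2 :=
        Order.height_strictMono hs (hm2.trans_lt (lt_top_iff_ne_top.mpr h2))
      have : Order.height p.eraseLast.last.2 + 1 ≤ Order.height p.last.2 :=
        ENat.add_one_le_iff (ne_top_of_lt hstrict) |>.mpr hstrict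
      calc ((n + 1 : ℕ) : ℕ∞) = (n : ℕ∞) + 1 := by push_cast; ring
        _ ≤ (Order.height p.eraseLast.last.1 + Order.height p.eraseLast.last.2) + 1 := by
            exact add_le_add_left hih 1
        _ = Order.height p.eraseLast.last.1 + (Order.height p.eraseLast.last.2 + 1) := by ring
        _ ≤ Order.height p.last.1 + Order.height p.last.2 := add_le_add hm1 this


section
variable {R M : Type*} [Ring R] [AddCommGroup M] [Module R M]

lemma mLen_add (P : Submodule R M) : mLen R M = mLen R P + mLen R (M ⧸ P) := by
  apply le_antisymm
  · -- subadditivity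
    apply Order.height_le
    intro p hp
    have hg : StrictMono (fun Q : Submodule R M =>
        ((Submodule.comap P.subtype Q, Submodule.map P.mkQ Q) :
          Submodule R P × Submodule R (M ⧸ P))) := by
      intro Q₁ Q₂ h
      refine lt_of_le_of_ne ⟨Submodule.comap_mono h.le, Submodule.map_mono h.le⟩ ?_
      intro he
      rw [Prod.ext_iff] at he
      obtain ⟨he1, he2⟩ := he
      have e1 : Q₁ ⊓ P = Q₂ ⊓ P := by
        have := congrArg (Submodule.map P.subtype) he1
        rwa [Submodule.map_comap_subtype, Submodule.map_comap_subtype, inf_comm P Q₁,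
          inf_comm P Q₂] at this
      have e2 : Q₁ ⊔ P = Q₂ ⊔ P := by
        have := congrArg (Submodule.comap P.mkQ) he2
        rwa [Submodule.comap_map_mkQ, Submodule.comap_map_mkQ, sup_comm P Q₁,
          sup_comm P Q₂] at this
      exact (strictMono_inf_prod_sup (z := P) h).ne (Prod.ext e1 e2)
    have := ltseries_prod_le (p.map _ hg)
    simp only [LTSeries.map_length, LTSeries.last_map] at this
    refine this.trans (add_le_add (Order.height_mono le_top) (Order.height_mono le_top))
  · -- superadditivity
    rcases eq_or_ne (mLen R P) ⊤ with h1 | h1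
    · have : mLen R M = ⊤ := top_le_iff.mp (h1 ▸ mLen_submodule_le P)
      rw [this]; exact le_top
    rcases eq_or_ne (mLen R (M ⧸ P)) ⊤ with h2 | h2
    · have : mLen R M = ⊤ := top_le_iff.mp (h2 ▸ mLen_quotient_le P)
      rw [this]; exact le_top
    obtain ⟨a, ha⟩ := WithTop.ne_top_iff_exists.mp h1
    obtain ⟨b, hb⟩ := WithTop.ne_top_iff_exists.mp h2
    obtain ⟨p, hplast, hplen⟩ :=
      Order.exists_series_of_height_eq_coe (⊤ : Submodule R P) ha.symm
    have hco : Order.coheight (⊥ : Submodule R (M ⧸ P)) = (b : ℕ∞) := by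
      have e1 := Order.height_top_eq_krullDim (α := Submodule R (M ⧸ P))
      have e2 := Order.coheight_bot_eq_krullDim (α := Submodule R (M ⧸ P))
      have : (Order.coheight (⊥ : Submodule R (M ⧸ P)) : WithBot ℕ∞) =
          (Order.height (⊤ : Submodule R (M ⧸ P)) : WithBot ℕ∞) := by rw [e1, e2]
      rw [WithBot.coe_inj] at this
      rw [this]; exact hb.symm
    obtain ⟨q, qhead, hqlen⟩ :=
      Order.exists_series_of_coheight_eq_coe (⊥ : Submodule R (M ⧸ P)) hco
    have hmap : StrictMono (Submodule.map P.subtype) :=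
      Monotone.strictMono_of_injective (fun _ _ h => Submodule.map_mono h)
        (Submodule.map_injective_of_injective P.injective_subtype)
    have hcomap : StrictMono (Submodule.comap P.mkQ) :=
      Monotone.strictMono_of_injective (fun _ _ h => Submodule.comap_mono h)
        (Submodule.comap_injective_of_surjective (Submodule.mkQ_surjective P))
    set p₁ := p.map _ hmap with hp₁
    set q₁ := q.map _ hcomap with hq₁
    have hconn : p₁.last = q₁.head := by
      rw [hp₁, hq₁, LTSeries.last_map, LTSeries.head_map, hplast, qhead,
        Submodule.map_subtype_top, Submodule.comap_bot, Submodule.ker_mkQ]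
    have hlen : (((RelSeries.smash p₁ q₁ hconn).length : ℕ) : ℕ∞) ≤ mLen R M :=
      le_trans (Order.length_le_height_last (p := RelSeries.smash p₁ q₁ hconn))
        (Order.height_mono le_top)
    have heq : (RelSeries.smash p₁ q₁ hconn).length = a + b := by
      show p₁.length + q₁.length = a + b
      rw [hp₁, hq₁]
      simp [hplen, hqlen]
    rw [heq] at hlen
    rw [← ha, ← hb]
    exact_mod_cast hlen
end

lemma mLen_ne_top {R M : Type*} [Ring R] [AddCommGroup M] [Module R M]
    (h : IsFiniteLength R M) : mLen R M ≠ ⊤ := by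
  induction h with
  | of_subsingleton => rw [mLen_subsingleton]; exact ENat.zero_ne_top
  | @of_simple_quotient M _ _ P _ _ ih =>
    rw [mLen_add P]
    exact WithTop.add_ne_top.mpr ⟨ih, ne_top_of_le_ne_top ENat.one_ne_top mLen_simple⟩

/-- In a Noetherian local ring, if `dim R/(I,x) = dim R/I - 1 = 0`
and `R/(I,x)` has finite length, then `n ↦ length(R/(I, xⁿ))/n` is non-increasing. -/
theorem stmt0 {R : Type*} [CommRing R] [IsNoetherianRing R] [IsLocalRing R]
    (I : Ideal R) (x : R)
    (hdimI : ringKrullDim (R ⧸ I) = 1)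
    (hdimx : ringKrullDim (R ⧸ (I ⊔ Ideal.span {x})) = 0)
    (hfl : IsFiniteLength R (R ⧸ (I ⊔ Ideal.span {x}))) :
    ∀ n : ℕ, 1 ≤ n →
      (qlen (I ⊔ Ideal.span {x ^ (n + 1)}) : ℝ) / (n + 1) ≤
        (qlen (I ⊔ Ideal.span {x ^ n}) : ℝ) / n := by
  -- setup
  set A : ℕ → Ideal R := fun n => I ⊔ Ideal.span {x ^ n} with hA
  have hqlen : ∀ n, qlen (A n) = (mLen R (R ⧸ A n)).toNat := by
    intro n
    rw [qlen, mLen, ← Order.height_top_eq_krullDim, WithBot.unbotD_coe]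
  have hAle : ∀ n, A (n + 1) ≤ A n := by
    intro n
    exact sup_le_sup_left (Ideal.span_singleton_le_span_singleton.mpr
      (pow_dvd_pow x (Nat.le_succ n))) I
  set f : ℕ → ℕ∞ := fun n => mLen R (R ⧸ A n) with hf
  -- the cyclic layer
  set K : ℕ → Ideal R := fun n => LinearMap.ker
    (LinearMap.toSpanSingleton R (R ⧸ A (n + 1)) (Submodule.Quotient.mk (x ^ n))) with hK
  set d : ℕ → ℕ∞ := fun n => mLen R (R ⧸ K n) with hd
  have hKmem : ∀ n (r : R), r ∈ K n ↔ r * x ^ n ∈ A (n + 1) := by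
    intro n r
    rw [hK]
    simp only [LinearMap.mem_ker, LinearMap.toSpanSingleton_apply]
    rw [← Submodule.Quotient.mk_smul, smul_eq_mul, Submodule.Quotient.mk_eq_zero]
  -- additivity: f (n+1) = d n + f n
  have hadd : ∀ n, f (n + 1) = d n + f n := by
    intro n
    have hmap : Submodule.map (A (n + 1)).mkQ (A n) =
        LinearMap.range (LinearMap.toSpanSingleton R (R ⧸ A (n + 1)) (Submodule.Quotient.mk (x ^ n))) := by
      have h1 : A n = A (n + 1) ⊔ Ideal.span {x ^ n} := by
        rw [hA]
        simp only []
        rw [sup_assoc, sup_comm (Ideal.span {x ^ (n+1)}) (Ideal.span {x ^ n}),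
          sup_eq_left.mpr (Ideal.span_singleton_le_span_singleton.mpr
            (pow_dvd_pow x (Nat.le_succ n)))]
      rw [h1, Submodule.map_sup]
      have h2 : Submodule.map (A (n + 1)).mkQ (A (n + 1)) = ⊥ := by
        rw [← LinearMap.le_ker_iff_map, Submodule.ker_mkQ]
      rw [h2, bot_sup_eq]
      have h3 : (Ideal.span {x ^ n} : Submodule R R) = Submodule.span R {x ^ n} := rfl
      rw [h3, Submodule.map_span, Set.image_singleton]
      rw [LinearMap.span_singleton_eq_range]
      rfl
    have e1 : mLen R (R ⧸ A (n + 1)) =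
        mLen R (Submodule.map (A (n + 1)).mkQ (A n)) +
          mLen R ((R ⧸ A (n + 1)) ⧸ Submodule.map (A (n + 1)).mkQ (A n)) :=
      mLen_add _
    have e2 : mLen R ((R ⧸ A (n + 1)) ⧸ Submodule.map (A (n + 1)).mkQ (A n)) = f n :=
      mLen_congr (Submodule.quotientQuotientEquivQuotient (A (n + 1)) (A n) (hAle n))
    have e3 : mLen R (Submodule.map (A (n + 1)).mkQ (A n)) = d n := by
      rw [hmap]
      exact (mLen_congr (LinearMap.quotKerEquivRange (LinearMap.toSpanSingleton R (R ⧸ A (n + 1)) (Submodule.Quotient.mk (x ^ n))))).symm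
    rw [hf]; simp only []
    rw [e1, e2, e3]

  -- monotonicity of layers
  have hKle : ∀ n, K n ≤ K (n + 1) := by
    intro n r hr
    rw [hKmem] at hr ⊢
    obtain ⟨i, hi, s, hs, heq⟩ := Submodule.mem_sup.mp hr
    obtain ⟨a, ha⟩ := Ideal.mem_span_singleton'.mp hs
    refine Submodule.mem_sup.mpr ⟨i * x, Ideal.mul_mem_right x I hi,
      a * x ^ (n + 2), Ideal.mem_span_singleton'.mpr ⟨a, rfl⟩, ?_⟩
    linear_combination x * heq + x * ha
  have hA1K : ∀ n, A 1 ≤ K n := by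
    intro n
    rw [hA]
    refine sup_le ?_ ?_
    · intro r hr
      rw [hKmem]
      exact Submodule.mem_sup_left (Ideal.mul_mem_right _ I hr)
    · rw [Ideal.span_le, Set.singleton_subset_iff]
      rw [SetLike.mem_coe, hKmem]
      exact Submodule.mem_sup_right (Ideal.mem_span_singleton'.mpr ⟨1, by ring⟩)
  have hquot : ∀ {P Q : Ideal R}, P ≤ Q → mLen R (R ⧸ Q) ≤ mLen R (R ⧸ P) := by
    intro P Q h
    refine mLen_le_of_surjective (Submodule.mapQ P Q LinearMap.id (by simpa using h)) ?_
    intro y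
    obtain ⟨m, rfl⟩ := Submodule.mkQ_surjective Q y
    exact ⟨Submodule.Quotient.mk m, by rw [Submodule.mkQ_apply, Submodule.mapQ_apply]; rfl⟩
  have hdmono : ∀ n, d (n + 1) ≤ d n := fun n => hquot (hKle n)
  have hdf1 : ∀ n, d n ≤ f 1 := fun n => hquot (hA1K n)
  have hf1 : f 1 ≠ ⊤ := by
    have hAeq : A 1 = I ⊔ Ideal.span {x} := by rw [hA]; simp [pow_one]
    have := mLen_congr (Submodule.quotEquivOfEq (A 1) (I ⊔ Ideal.span {x}) hAeq)
    rw [hf]; simp only []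
    rw [this]
    exact mLen_ne_top hfl
  have hf0 : f 0 = 0 := by
    have hAtop : A 0 = ⊤ := by
      rw [hA]; simp [pow_zero, Ideal.span_singleton_one]
    rw [hf]; simp only []
    haveI : Subsingleton (R ⧸ A 0) :=
      Submodule.Quotient.subsingleton_iff.mpr hAtop
    exact mLen_subsingleton
  have hfne : ∀ n, f (n + 1) ≠ ⊤ := by
    intro n
    induction n with
    | zero => exact hf1
    | succ m ih =>
      rw [hadd (m + 1)]
      exact WithTop.add_ne_top.mpr ⟨ne_top_of_le_ne_top hf1 (hdf1 (m + 1)), ih⟩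
  -- key inequality : n * d n ≤ f n
  have hkey : ∀ n : ℕ, (n : ℕ∞) * d n ≤ f n := by
    intro n
    induction n with
    | zero => simp
    | succ m ih =>
      rw [hadd m]
      have h1 : (m : ℕ∞) * d (m + 1) ≤ f m :=
        le_trans (mul_le_mul_right (hdmono m) _) ih
      calc ((m + 1 : ℕ) : ℕ∞) * d (m + 1) = d (m + 1) + (m : ℕ∞) * d (m + 1) := by
            push_cast; ring
        _ ≤ d m + f m := add_le_add (hdmono m) h1
  -- main inequality in ℕ∞
  have hmain : ∀ n : ℕ, (n : ℕ∞) * f (n + 1) ≤ ((n : ℕ∞) + 1) * f n := by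
    intro n
    rw [hadd n]
    calc (n : ℕ∞) * (d n + f n) = (n : ℕ∞) * d n + (n : ℕ∞) * f n := by ring
      _ ≤ f n + (n : ℕ∞) * f n := add_le_add_left (hkey n) _
      _ = ((n : ℕ∞) + 1) * f n := by ring
  -- numeric conclusion
  intro n hn
  have hne1 : f n ≠ ⊤ := by
    obtain ⟨m, rfl⟩ := Nat.exists_eq_add_of_le hn
    rw [Nat.add_comm]
    exact hfne m
  have hne2 : f (n + 1) ≠ ⊤ := hfne n
  have hfa : f n = ((f n).toNat : ℕ∞) := (ENat.coe_toNat hne1).symm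
  have hfb : f (n + 1) = ((f (n + 1)).toNat : ℕ∞) := (ENat.coe_toNat hne2).symm
  have hnat : n * (f (n + 1)).toNat ≤ (n + 1) * (f n).toNat := by
    have h := hmain n
    rw [hfa, hfb] at h
    exact_mod_cast h
  have hq1 : qlen (I ⊔ Ideal.span {x ^ (n + 1)}) = (f (n + 1)).toNat := hqlen (n + 1)
  have hq2 : qlen (I ⊔ Ideal.span {x ^ n}) = (f n).toNat := hqlen n
  rw [hq1, hq2]
  rw [div_le_div_iff₀ (by positivity) (by exact_mod_cast Nat.cast_pos.mpr hn)]
  have : ((n : ℝ)) * (f (n + 1)).toNat ≤ ((n : ℝ) + 1) * (f n).toNat := by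
    exact_mod_cast hnat
  nlinarith [this]
end

section
/- Let (R, m) be a Noetherian local ring of characteristic p > 0 with a test element c, and let p be a prime ideal of R. If for every q = p^e there exists a p-primary ideal I_q with p^{[q]} ⊆ I_q ⊆ (p^{[q]})*, then (p^{[q]})* is p-primary for every q. -/
open Filter IsLocalRing

section Aux

variable {R : Type*} [CommRing R]

lemma pow_mem_fpow {I : Ideal R} {x : R} (hx : x ∈ I) (q : ℕ) : x ^ q ∈ fpow I q :=
  Ideal.subset_span ⟨x, hx, rfl⟩

lemma fpow_one (I : Ideal R) : fpow I 1 = I := by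
  simp only [fpow, pow_one, Set.image_id']
  exact Ideal.span_eq I

lemma fpow_le_pow (I : Ideal R) (n : ℕ) : fpow I n ≤ I ^ n := by
  rw [fpow, Ideal.span_le]
  rintro _ ⟨x, hx, rfl⟩
  exact Ideal.pow_mem_pow hx n

/-- Composition of Frobenius powers, in characteristic `p`. -/
lemma fpow_fpow (p : ℕ) (hp : p.Prime) [CharP R p] (I : Ideal R) (a b : ℕ) :
    fpow (fpow I (p ^ a)) (p ^ b) = fpow I (p ^ (a + b)) := by
  haveI : Fact p.Prime := ⟨hp⟩
  apply le_antisymm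
  · rw [fpow, Ideal.span_le]
    rintro _ ⟨y, hy, rfl⟩
    simp only [SetLike.mem_coe] at hy ⊢
    induction hy using Submodule.span_induction with
    | mem x hx =>
      obtain ⟨z, hz, rfl⟩ := hx
      have : (z ^ p ^ a) ^ p ^ b = z ^ p ^ (a + b) := by
        rw [← pow_mul, ← pow_add]
      rw [this]
      exact pow_mem_fpow hz _
    | zero =>
      rw [zero_pow (pow_ne_zero b hp.pos.ne')]
      exact (fpow I (p ^ (a + b))).zero_mem
    | add x y _ _ hx hy =>
      rw [add_pow_char_pow]
      exact Ideal.add_mem _ hx hy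
    | smul r x _ hx =>
      rw [smul_eq_mul, mul_pow]
      exact Ideal.mul_mem_left _ _ hx
  · rw [fpow, Ideal.span_le]
    rintro _ ⟨z, hz, rfl⟩
    show z ^ p ^ (a + b) ∈ fpow (fpow I (p ^ a)) (p ^ b)
    have : z ^ p ^ (a + b) = (z ^ p ^ a) ^ p ^ b := by
      rw [← pow_mul, ← pow_add]
    rw [this]
    exact pow_mem_fpow (pow_mem_fpow hz _) _

lemma mem_tightClosure_of_witness {p : ℕ} {I : Ideal R} {x c' : R}
    (hc' : ∀ P ∈ minimalPrimes R, c' ∉ P)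
    (hx : ∀ e : ℕ, c' * x ^ p ^ e ∈ fpow I (p ^ e)) :
    x ∈ tightClosure p I :=
  Ideal.subset_span ⟨c', hc', 0, fun e _ => hx e⟩

end Aux

/-- If for each `q = p^e` there is a `P`-primary ideal `I_q` with
`P^{[q]} ⊆ I_q ⊆ (P^{[q]})*`, then `(P^{[q]})*` is `P`-primary for every `q`. -/
theorem stmt5 {R : Type*} [CommRing R] [IsNoetherianRing R] [IsLocalRing R]
    (p : ℕ) (hp : p.Prime) [CharP R p] (c : R) (hc : IsTestElement p c)
    (P : Ideal R) (hP : P.IsPrime)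
    (h : ∀ e : ℕ, ∃ Iq : Ideal R, Iq.IsPrimary ∧ Iq.radical = P ∧
      fpow P (p ^ e) ≤ Iq ∧ Iq ≤ tightClosure p (fpow P (p ^ e))) :
    ∀ e : ℕ, (tightClosure p (fpow P (p ^ e))).IsPrimary ∧
      (tightClosure p (fpow P (p ^ e))).radical = P := by
  intro e₀
  set T : Ideal R := tightClosure p (fpow P (p ^ e₀)) with hT
  -- `c²` avoids all minimal primes
  have hc2 : ∀ Q ∈ minimalPrimes R, c * c ∉ Q := by
    intro Q hQ hmem
    have hQp : Q.IsPrime := hQ.1.1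
    rcases hQp.mem_or_mem hmem with h' | h' <;> exact hc.1 Q hQ h'
  -- the radical of T is contained in P
  have hradP : T.radical ≤ P := by
    intro x hx
    by_contra hxP
    obtain ⟨n, hn⟩ := hx
    -- c ∈ I_{e₀+e} for every e, hence c² ∈ P^(p^(e₀+e))
    have key : ∀ e : ℕ, c * c ∈ P ^ p ^ (e₀ + e) := by
      intro e
      obtain ⟨Iq, hprim, hrad, hle1, hle2⟩ := h (e₀ + e)
      have h1 : c * (x ^ n) ^ p ^ e ∈ fpow P (p ^ (e₀ + e)) := by
        rw [← fpow_fpow p hp P e₀ e]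
        exact ((hc.2 _ _).mp hn) e
      have h2 : c * (x ^ n) ^ p ^ e ∈ Iq := hle1 h1
      have hxn : (x ^ n) ^ p ^ e ∉ P := by
        rw [← pow_mul]
        intro hmem
        rcases Nat.eq_zero_or_pos (n * p ^ e) with h0 | h0
        · rw [h0, pow_zero] at hmem
          exact hP.ne_top (Ideal.eq_top_iff_one P |>.mpr hmem)
        · exact hxP (hP.mem_of_pow_mem _ hmem)
      have hcIq : c ∈ Iq := by
        rcases (Ideal.isPrimary_iff.mp hprim).2 h2 with h' | h'
        · exact h'
        · rw [hrad] at h'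
          exact absurd h' hxn
      have hcT : c ∈ tightClosure p (fpow P (p ^ (e₀ + e))) := hle2 hcIq
      have := ((hc.2 _ _).mp hcT) 0
      rw [pow_zero, pow_one, fpow_one] at this
      exact fpow_le_pow P (p ^ (e₀ + e)) this
    -- Krull intersection: c² = 0
    have hc2bot : c * c ∈ (⊥ : Ideal R) := by
      rw [← Ideal.iInf_pow_eq_bot_of_isLocalRing P hP.ne_top]
      refine Ideal.mem_iInf.mpr fun n => ?_
      have hle : n ≤ p ^ (e₀ + n) := by
        calc n ≤ p ^ n := (Nat.lt_pow_self hp.one_lt : n < p ^ n).le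
        _ ≤ p ^ (e₀ + n) := Nat.pow_le_pow_right hp.pos (Nat.le_add_left n e₀)
      exact Ideal.pow_le_pow_right hle (key n)
    -- contradiction with c avoiding minimal primes
    obtain ⟨Q, hQ, -⟩ := Ideal.exists_minimalPrimes_le (J := maximalIdeal R) bot_le
    have hzero : c * c = 0 := by simpa using hc2bot
    exact hc2 Q hQ (hzero ▸ Q.zero_mem)
  -- P is contained in the radical of T
  have hPrad : P ≤ T.radical := by
    obtain ⟨Iq, hprim, hrad, hle1, hle2⟩ := h e₀
    calc P = Iq.radical := hrad.symm
    _ ≤ T.radical := Ideal.radical_mono hle2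
  have hradEq : T.radical = P := le_antisymm hradP hPrad
  -- T is not the whole ring
  have hne : T ≠ ⊤ := by
    intro htop
    rw [htop, Ideal.radical_top] at hradEq
    exact hP.ne_top hradEq.symm
  refine ⟨Ideal.isPrimary_iff.mpr ⟨hne, ?_⟩, hradEq⟩
  intro a b hab
  by_cases hbP : b ∈ P
  · exact Or.inr (hradEq ▸ hbP)
  · left
    refine mem_tightClosure_of_witness hc2 fun e => ?_
    obtain ⟨Iq, hprim, hrad, hle1, hle2⟩ := h (e₀ + e)
    have h1 : c * (a * b) ^ p ^ e ∈ fpow P (p ^ (e₀ + e)) := by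
      rw [← fpow_fpow p hp P e₀ e]
      exact ((hc.2 _ _).mp hab) e
    have h2 : (c * a ^ p ^ e) * b ^ p ^ e ∈ Iq := by
      have : (c * a ^ p ^ e) * b ^ p ^ e = c * (a * b) ^ p ^ e := by ring
      rw [this]
      exact hle1 h1
    have hbpow : b ^ p ^ e ∉ P := fun hmem => hbP (hP.mem_of_pow_mem _ hmem)
    have h3 : c * a ^ p ^ e ∈ Iq := by
      rcases (Ideal.isPrimary_iff.mp hprim).2 h2 with h' | h'
      · exact h'
      · rw [hrad] at h'
        exact absurd h' hbpow
    have h4 : c * a ^ p ^ e ∈ tightClosure p (fpow P (p ^ (e₀ + e))) := hle2 h3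
    have h5 := ((hc.2 _ _).mp h4) 0
    rw [pow_zero, pow_one, fpow_one, ← fpow_fpow p hp P e₀ e] at h5
    have : (c * c) * a ^ p ^ e = c * (c * a ^ p ^ e) := by ring
    rw [this]
    exact h5
end

section
/- Let (R, m) be a Noetherian local ring of dimension d and characteristic p > 0, J an m-primary ideal, I an arbitrary ideal, and M a finitely generated R-module. Then there exists a constant D such that for all powers q, q' of p, length(M/(I^{[q]} + J^{[qq']})M) ≤ D · (q')^{dim R/I} · q^{dim M}. -/
open Filter IsLocalRing

open Order

noncomputable section LenTheory

variable {R : Type*} [CommRing R]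

/-- length of a module as krullDim of its submodule lattice -/
noncomputable def len (R : Type*) [CommRing R] (M : Type*) [AddCommGroup M] [Module R M] : ℕ∞ :=
  (Order.krullDim (Submodule R M)).unbotD 0

variable {M N : Type*} [AddCommGroup M] [Module R M] [AddCommGroup N] [Module R N]

lemma len_coe (R : Type*) [CommRing R] (M : Type*) [AddCommGroup M] [Module R M] :
    (len R M : WithBot ℕ∞) = Order.krullDim (Submodule R M) := by
  have h : Order.krullDim (Submodule R M) ≠ ⊥ := by
    have := Order.krullDim_nonneg (α := Submodule R M)
    intro hbot; rw [hbot] at this; exact absurd this (by simp)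
  rw [len]
  cases hk : Order.krullDim (Submodule R M) with
  | bot => exact absurd hk h
  | coe x => simp [WithBot.unbotD]

lemma len_le_iff {C : ℕ∞} : len R M ≤ C ↔ ∀ p : LTSeries (Submodule R M), (p.length : ℕ∞) ≤ C := by
  constructor
  · intro h p
    have h1 := Order.LTSeries.length_le_krullDim p
    rw [← len_coe] at h1
    exact le_trans (by exact_mod_cast h1) h
  · intro h
    have : Order.krullDim (Submodule R M) ≤ (C : WithBot ℕ∞) := by
      rw [Order.krullDim]
      exact iSup_le fun p => by exact_mod_cast h p
    rw [← len_coe] at this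
    exact_mod_cast this

lemma length_le_len (p : LTSeries (Submodule R M)) : (p.length : ℕ∞) ≤ len R M :=
  len_le_iff.mp le_rfl p

lemma len_le_of_surjective (f : M →ₗ[R] N) (hf : Function.Surjective f) : len R N ≤ len R M := by
  have hs : StrictMono (Submodule.comap f) := by
    intro a b hab
    refine lt_of_le_of_ne (Submodule.comap_mono hab.le) fun hEq => hab.ne ?_
    rw [← Submodule.map_comap_eq_of_surjective hf a, ← Submodule.map_comap_eq_of_surjective hf b,
      hEq]
  have := Order.krullDim_le_of_strictMono _ hs
  rw [← len_coe, ← len_coe] at this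
  exact_mod_cast this

lemma len_eq_of_equiv (e : M ≃ₗ[R] N) : len R M = len R N :=
  le_antisymm (len_le_of_surjective e.symm.toLinearMap e.symm.surjective)
    (len_le_of_surjective e.toLinearMap e.surjective)

lemma len_subsingleton (h : Subsingleton M) : len R M ≤ 0 := by
  rw [len_le_iff]
  intro p
  have : Subsingleton (Submodule R M) := ⟨fun a b => by
    ext x; have : x = 0 := Subsingleton.elim x 0; simp [this]⟩
  rcases p with ⟨k, f, hf⟩
  match k with
  | 0 => simp
  | (k+1) =>
    exact absurd (hf 0)
      (by rw [Subsingleton.elim (f (Fin.castSucc 0)) (f (Fin.succ 0))]; exact lt_irrefl (f (Fin.succ 0)))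

end LenTheory
open Order

section ChainBound

variable {α β γ : Type*} [Preorder α] [PartialOrder β] [PartialOrder γ]

lemma height_add_one_le' {a b : β} (hab : a < b) : Order.height a + 1 ≤ Order.height b := by
  rw [Order.height_eq_iSup_lt_height b]
  exact le_iSup₂ (f := fun y (_ : y < b) => Order.height y + 1) a hab

lemma chain_bound (f : α → β) (g : α → γ) (hf : Monotone f) (hg : Monotone g)
    (hst : ∀ a b : α, a < b → f a = f b → g a = g b → False) (s : LTSeries α) :
    (s.length : ℕ∞) ≤ Order.height (f s.last) + Order.height (g s.last) := by
  suffices H : ∀ (n : ℕ) (s : LTSeries α), s.length = n →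
      (n : ℕ∞) ≤ Order.height (f s.last) + Order.height (g s.last) by
    exact H s.length s rfl
  intro n
  induction n with
  | zero => simp
  | succ k ih =>
    intro s hn
    have hlen : s.length ≠ 0 := by omega
    have hlt : s.eraseLast.last < s.last := s.eraseLast_last_rel_last hlen
    have hel : s.eraseLast.length = k := by simp [RelSeries.eraseLast]; omega
    have IH := ih s.eraseLast hel
    rcases (hf hlt.le).lt_or_eq with hfl | hfeq
    · calc (k : ℕ∞) + 1 ≤ (Order.height (f s.eraseLast.last) + Order.height (g s.eraseLast.last)) + 1 :=
            add_le_add_left IH 1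
      _ = (Order.height (f s.eraseLast.last) + 1) + Order.height (g s.eraseLast.last) := by ring
      _ ≤ Order.height (f s.last) + Order.height (g s.last) :=
            add_le_add (height_add_one_le' hfl) (Order.height_mono (hg hlt.le))
    · have hgl : g s.eraseLast.last < g s.last := by
        rcases (hg hlt.le).lt_or_eq with h | h
        · exact h
        · exact absurd (hst _ _ hlt hfeq h) (fun x => x)
      calc (k : ℕ∞) + 1 ≤ (Order.height (f s.eraseLast.last) + Order.height (g s.eraseLast.last)) + 1 :=
            add_le_add_left IH 1
      _ = Order.height (f s.eraseLast.last) + (Order.height (g s.eraseLast.last) + 1) := by ring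
      _ ≤ Order.height (f s.last) + Order.height (g s.last) :=
            add_le_add (Order.height_mono (hf hlt.le)) (height_add_one_le' hgl)

end ChainBound

section LenTheory2

variable {R : Type*} [CommRing R] {M : Type*} [AddCommGroup M] [Module R M]

lemma height_le_len (W : Submodule R M) : Order.height W ≤ len R M := by
  have := Order.height_le_krullDim W
  rw [← len_coe] at this
  exact_mod_cast this

lemma len_le_add (N : Submodule R M) : len R M ≤ len R N + len R (M ⧸ N) := by
  rw [len_le_iff]
  intro s
  have hb := chain_bound (fun W : Submodule R M => W.comap N.subtype)
      (fun W : Submodule R M => W.map N.mkQ)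
      (fun _ _ h => Submodule.comap_mono h) (fun _ _ h => Submodule.map_mono h)
      (fun a b hab hfe hge => by
        have h1 : N ⊓ a = N ⊓ b := by
          rw [← Submodule.map_comap_subtype N a, ← Submodule.map_comap_subtype N b]
          exact congrArg _ hfe
        have h2 : N ⊔ a = N ⊔ b := by
          rw [← Submodule.comap_map_mkQ N a, ← Submodule.comap_map_mkQ N b]
          exact congrArg _ hge
        refine hab.ne ?_
        have h3 := sup_inf_assoc_of_le (x := a) N (z := b) hab.le
        rw [sup_comm a N, h2, sup_comm N b] at h3
        rw [inf_eq_right.mpr le_sup_left, ← h1, sup_eq_left.mpr inf_le_right] at h3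
        exact h3.symm) s
  exact hb.trans (add_le_add (height_le_len _) (height_le_len _))

lemma len_quot_mono {A B : Submodule R M} (h : A ≤ B) : len R (M ⧸ B) ≤ len R (M ⧸ A) := by
  refine len_le_of_surjective (Submodule.mapQ A B LinearMap.id h) ?_
  intro y
  obtain ⟨x, rfl⟩ := B.mkQ_surjective y
  exact ⟨A.mkQ x, by rw [Submodule.mkQ_apply, Submodule.mapQ_apply]; rfl⟩

lemma len_quot_le_add {A B : Submodule R M} (h : A ≤ B) :
    len R (M ⧸ A) ≤ len R (B.map A.mkQ) + len R (M ⧸ B) :=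
  (len_le_add (B.map A.mkQ)).trans (add_le_add le_rfl
    (le_of_eq (len_eq_of_equiv (Submodule.quotientQuotientEquivQuotient A B h))))

lemma len_span_singleton_le (x : M) (c : Ideal R) (h : ∀ r ∈ c, r • x = (0 : M)) :
    len R (Submodule.span R {x}) ≤ len R (R ⧸ c) := by
  set φ := LinearMap.toSpanSingleton R M x with hφ
  have hker : c ≤ LinearMap.ker φ := fun r hr => by
    simp only [LinearMap.mem_ker, hφ, LinearMap.toSpanSingleton_apply]
    exact h r hr
  set ψ := Submodule.liftQ c φ hker with hψ
  have hr : LinearMap.range ψ = Submodule.span R {x} := by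
    rw [hψ, Submodule.range_liftQ, hφ, ← LinearMap.span_singleton_eq_range]
  calc len R (Submodule.span R {x}) = len R (LinearMap.range ψ) := by rw [hr]
  _ ≤ len R (R ⧸ c) := len_le_of_surjective ψ.rangeRestrict ψ.surjective_rangeRestrict

end LenTheory2

section Tools

variable {R : Type*} [CommRing R]

lemma len_quot_top_le : len R (R ⧸ (⊤ : Ideal R)) ≤ 0 :=
  len_subsingleton (Submodule.Quotient.subsingleton_iff.mpr rfl)

lemma frob_pow_mem {p : ℕ} (hp : p.Prime) [CharP R p] (e : ℕ) (S : Set R) {z : R}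
    (hz : z ∈ Ideal.span S) : z ^ p ^ e ∈ Ideal.span ((fun x => x ^ p ^ e) '' S) := by
  haveI := Fact.mk hp
  induction hz using Submodule.span_induction with
  | mem x hx => exact Ideal.subset_span ⟨x, hx, rfl⟩
  | zero =>
      rw [zero_pow (pow_ne_zero e hp.ne_zero)]
      exact zero_mem _
  | add x y hx hy ihx ihy => rw [add_pow_char_pow]; exact add_mem ihx ihy
  | smul r x hx ih => rw [smul_eq_mul, mul_pow]; exact Ideal.mul_mem_left _ _ ih

lemma key_pow (b : Ideal R) (y : R) (L : ℕ∞) (hL : len R (R ⧸ (b ⊔ Ideal.span {y})) ≤ L) :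
    ∀ n : ℕ, len R (R ⧸ (b ⊔ Ideal.span {y ^ n})) ≤ (n : ℕ∞) * L := by
  intro n
  induction n with
  | zero =>
      rw [pow_zero, Ideal.span_singleton_one, sup_top_eq]
      exact le_trans len_quot_top_le (by simp)
  | succ j ih =>
      set A := b ⊔ Ideal.span {y ^ (j + 1)} with hA
      set B := b ⊔ Ideal.span {y ^ j} with hB
      have hAB : A ≤ B :=
        sup_le_sup_left (Ideal.span_singleton_le_span_singleton.mpr (pow_dvd_pow y j.le_succ)) b
      have step := len_quot_le_add (M := R) (A := A) (B := B) hAB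
      -- compute the middle term
      have hmap : Submodule.map A.mkQ B = Submodule.span R {A.mkQ (y ^ j)} := by
        rw [hB, Submodule.map_sup]
        have h1 : Submodule.map A.mkQ b = ⊥ := by
          rw [eq_bot_iff]
          rintro z ⟨w, hw, rfl⟩
          simp only [Submodule.mem_bot, Submodule.mkQ_apply, Submodule.Quotient.mk_eq_zero]
          exact le_sup_left (α := Ideal R) hw
        have h2 : Submodule.map A.mkQ (Ideal.span {y ^ j}) = Submodule.span R {A.mkQ (y ^ j)} := by
          rw [Ideal.span, Submodule.map_span, Set.image_singleton]
        rw [h1, h2, bot_sup_eq]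
      have hmid : len R (Submodule.map A.mkQ B) ≤ L := by
        rw [hmap]
        refine le_trans (len_span_singleton_le _ (b ⊔ Ideal.span {y}) ?_) hL
        intro r hr
        obtain ⟨rb, hrb, rs, hrs, rfl⟩ := Submodule.mem_sup.mp hr
        obtain ⟨z, rfl⟩ := Ideal.mem_span_singleton'.mp hrs
        rw [Submodule.mkQ_apply, ← Submodule.Quotient.mk_smul, Submodule.Quotient.mk_eq_zero]
        have heq : (rb + z * y) • y ^ j = rb * y ^ j + z * y ^ (j + 1) := by
          rw [smul_eq_mul]; ring
        rw [heq]
        exact Submodule.add_mem _ (le_sup_left (α := Ideal R) (Ideal.mul_mem_right _ _ hrb))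
          (le_sup_right (α := Ideal R) (Ideal.mem_span_singleton'.mpr ⟨z, rfl⟩))
      calc len R (R ⧸ A) ≤ len R (Submodule.map A.mkQ B) + len R (R ⧸ B) := step
      _ ≤ L + (j : ℕ∞) * L := add_le_add hmid ih
      _ = ((j + 1 : ℕ) : ℕ∞) * L := by push_cast; ring

end Tools

section Tools2

variable {R : Type*} [CommRing R]

lemma key_fin (n : ℕ) (F : Finset R) (b : Ideal R) (L : ℕ∞)
    (hL : len R (R ⧸ (b ⊔ Ideal.span (F : Set R))) ≤ L) :
    len R (R ⧸ (b ⊔ Ideal.span ((fun x => x ^ n) '' (F : Set R)))) ≤ (n : ℕ∞) ^ F.card * L := by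
  classical
  induction F using Finset.induction generalizing b L with
  | empty =>
      rw [Finset.coe_empty, Set.image_empty, Ideal.span_empty, sup_bot_eq]
      rw [Finset.coe_empty, Ideal.span_empty, sup_bot_eq] at hL
      simpa using hL
  | insert a F h ih =>
      rw [Finset.coe_insert, Ideal.span_insert] at hL
      have hL' : len R (R ⧸ ((b ⊔ Ideal.span {a}) ⊔ Ideal.span (F : Set R))) ≤ L := by
        rwa [sup_assoc]
      have h1 := ih (b ⊔ Ideal.span {a}) L hL'
      have h1' : len R (R ⧸ ((b ⊔ Ideal.span ((fun x => x ^ n) '' (F : Set R))) ⊔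
          Ideal.span {a})) ≤ (n : ℕ∞) ^ F.card * L := by
        rwa [sup_right_comm] at h1
      have h2 := key_pow (b ⊔ Ideal.span ((fun x => x ^ n) '' (F : Set R))) a
        ((n : ℕ∞) ^ F.card * L) h1' n
      rw [Finset.coe_insert, Set.image_insert_eq, Ideal.span_insert,
        sup_comm (Ideal.span {a ^ n}), ← sup_assoc]
      calc len R (R ⧸ (b ⊔ Ideal.span ((fun x => x ^ n) '' (F : Set R))) ⊔
              Ideal.span {a ^ n}) ≤ (n : ℕ∞) * ((n : ℕ∞) ^ F.card * L) := h2
      _ = (n : ℕ∞) ^ (insert a F).card * L := by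
          rw [Finset.card_insert_of_notMem h, pow_succ]; ring

end Tools2

section Fingen

universe v

variable {R : Type*} [CommRing R]

lemma fingen_len_le (n : ℕ) :
    ∀ (M : Type v) [AddCommGroup M] [Module R M] (F : Finset M) (c : Ideal R) (L : ℕ∞),
      F.card ≤ n → (∀ x ∈ F, ∀ r ∈ c, r • x = (0 : M)) →
      Submodule.span R (F : Set M) = ⊤ → len R (R ⧸ c) ≤ L → len R M ≤ (n : ℕ∞) * L := by
  classical
  induction n with
  | zero =>
      intro M _ _ F c L hcard _ hspan _
      have hF : F = ∅ := Finset.card_eq_zero.mp (Nat.le_zero.mp hcard)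
      subst hF
      rw [Finset.coe_empty, Submodule.span_empty] at hspan
      have hsub : Subsingleton M := by
        constructor
        intro x y
        have hx : x ∈ (⊥ : Submodule R M) := hspan ▸ Submodule.mem_top
        have hy : y ∈ (⊥ : Submodule R M) := hspan ▸ Submodule.mem_top
        rw [Submodule.mem_bot] at hx hy
        rw [hx, hy]
      exact le_trans (len_subsingleton hsub) (by simp)
  | succ k ih =>
      intro M _ _ F c L hcard hkill hspan hL
      rcases Finset.eq_empty_or_nonempty F with rfl | ⟨a, ha⟩
      · rw [Finset.coe_empty, Submodule.span_empty] at hspan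
        have hsub : Subsingleton M := by
          constructor
          intro x y
          have hx : x ∈ (⊥ : Submodule R M) := hspan ▸ Submodule.mem_top
          have hy : y ∈ (⊥ : Submodule R M) := hspan ▸ Submodule.mem_top
          rw [Submodule.mem_bot] at hx hy
          rw [hx, hy]
        exact le_trans (len_subsingleton hsub) zero_le
      · set N : Submodule R M := Submodule.span R {a} with hN
        have h1 : len R M ≤ len R N + len R (M ⧸ N) := len_le_add N
        have h2 : len R N ≤ L :=
          le_trans (len_span_singleton_le a c (hkill a ha)) hL
        have h3 : len R (M ⧸ N) ≤ (k : ℕ∞) * L := by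
          refine ih (M ⧸ N) ((F.erase a).image N.mkQ) c L ?_ ?_ ?_ hL
          · exact le_trans (Finset.card_image_le) (by rw [Finset.card_erase_of_mem ha]; omega)
          · intro x hx r hr
            obtain ⟨y, _, rfl⟩ := Finset.mem_image.mp hx
            rw [Submodule.mkQ_apply, ← Submodule.Quotient.mk_smul, hkill y (Finset.mem_of_mem_erase ‹_›) r hr]
            rfl
          · rw [Finset.coe_image]
            have himg : N.mkQ '' (F : Set M) = insert (N.mkQ a) (N.mkQ '' ((F.erase a) : Set M)) := by
              conv_lhs => rw [← Finset.insert_erase ha]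
              rw [Finset.coe_insert, Set.image_insert_eq]
            have hmka : N.mkQ a = 0 := by
              rw [Submodule.mkQ_apply, Submodule.Quotient.mk_eq_zero]
              exact Submodule.mem_span_singleton_self a
            have : Submodule.span R (N.mkQ '' (F : Set M)) = ⊤ := by
              rw [← Submodule.map_span, hspan, Submodule.map_top, Submodule.range_mkQ]
            rw [himg, hmka, Submodule.span_insert_zero] at this
            exact this
        calc len R M ≤ L + (k : ℕ∞) * L := h1.trans (add_le_add h2 h3)
        _ = ((k + 1 : ℕ) : ℕ∞) * L := by push_cast; ring

end Fingen

section Primes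

open IsLocalRing

variable {R : Type*} [CommRing R]

lemma chains_over_of_dim [Nontrivial R] (B : Ideal R) (δ : ℕ)
    (hd : ringKrullDim (R ⧸ B) ≤ (δ : WithBot ℕ∞))
    (s : LTSeries {p : PrimeSpectrum R // B ≤ p.asIdeal}) : (s.length : ℕ∞) ≤ δ := by
  let f : {p : PrimeSpectrum R // B ≤ p.asIdeal} → PrimeSpectrum (R ⧸ B) := fun p =>
    ⟨Ideal.map (Ideal.Quotient.mk B) p.1.asIdeal,
      haveI := p.1.isPrime
      Ideal.map_isPrime_of_surjective Ideal.Quotient.mk_surjective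
        (by rw [Ideal.mk_ker]; exact p.2)⟩
  have hrec : ∀ p : {p : PrimeSpectrum R // B ≤ p.asIdeal},
      Ideal.comap (Ideal.Quotient.mk B) (Ideal.map (Ideal.Quotient.mk B) p.1.asIdeal)
        = p.1.asIdeal := by
    intro p
    rw [Ideal.comap_map_of_surjective _ Ideal.Quotient.mk_surjective, ← RingHom.ker_eq_comap_bot,
      Ideal.mk_ker, sup_eq_left]
    exact p.2
  have hf : StrictMono f := by
    intro a b hab
    have hle : f a ≤ f b := by
      rw [← PrimeSpectrum.asIdeal_le_asIdeal]
      exact Ideal.map_mono ((PrimeSpectrum.asIdeal_le_asIdeal _ _).mpr hab.le)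
    refine hle.lt_of_ne fun hEq => hab.ne ?_
    have : Ideal.map (Ideal.Quotient.mk B) a.1.asIdeal
        = Ideal.map (Ideal.Quotient.mk B) b.1.asIdeal := congrArg PrimeSpectrum.asIdeal hEq
    have h2 : a.1.asIdeal = b.1.asIdeal := by
      rw [← hrec a, ← hrec b, this]
    exact Subtype.ext (PrimeSpectrum.ext h2)
  have := Order.LTSeries.length_le_krullDim (s.map f hf)
  have h3 : ((s.length : ℕ) : WithBot ℕ∞) ≤ (δ : WithBot ℕ∞) := le_trans this hd
  exact_mod_cast h3

variable [IsLocalRing R] [IsNoetherianRing R]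

lemma rad_case (B : Ideal R) (hB : B ≠ ⊤)
    (hprime : ∀ p : Ideal R, p.IsPrime → B ≤ p → p = maximalIdeal R) :
    ∃ N, 0 < N ∧ (maximalIdeal R) ^ N ≤ B := by
  have hrad : B.radical = maximalIdeal R := by
    rw [Ideal.radical_eq_sInf]
    apply le_antisymm
    · exact sInf_le ⟨le_maximalIdeal hB, (maximalIdeal.isMaximal R).isPrime⟩
    · exact le_sInf fun p ⟨hBp, hp⟩ => (hprime p hp hBp).symm.le
  obtain ⟨n, hn⟩ := Ideal.exists_radical_pow_le_of_fg B (by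
    rw [hrad]; exact IsNoetherian.noetherian _)
  rw [hrad] at hn
  refine ⟨max n 1, lt_of_lt_of_le one_pos (le_max_right n 1), ?_⟩
  calc (maximalIdeal R) ^ max n 1 ≤ (maximalIdeal R) ^ n :=
        Ideal.pow_le_pow_right (le_max_left n 1)
  _ ≤ B := hn


lemma sop (δ : ℕ) : ∀ (B : Ideal R),
    (∀ s : LTSeries {p : PrimeSpectrum R // B ≤ p.asIdeal}, (s.length : ℕ∞) ≤ δ) →
    ∃ F : Finset R, F.card ≤ δ ∧ (∀ x ∈ F, x ∈ maximalIdeal R) ∧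
      ∃ N, 0 < N ∧ (maximalIdeal R) ^ N ≤ B ⊔ Ideal.span (F : Set R) := by
  classical
  induction δ with
  | zero =>
      intro B hchain
      refine ⟨∅, le_rfl, by simp, ?_⟩
      by_cases hB : B = ⊤
      · exact ⟨1, one_pos, by simp [hB]⟩
      · have hprime : ∀ p : Ideal R, p.IsPrime → B ≤ p → p = maximalIdeal R := by
          intro p hp hBp
          by_contra hne
          have hpm : p < maximalIdeal R := lt_of_le_of_ne (le_maximalIdeal hp.ne_top) hne
          have hmp : (maximalIdeal R).IsPrime := (maximalIdeal.isMaximal R).isPrime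
          let s : LTSeries {q : PrimeSpectrum R // B ≤ q.asIdeal} :=
            (RelSeries.singleton _ (⟨⟨maximalIdeal R, hmp⟩,
              hBp.trans hpm.le⟩ : {q : PrimeSpectrum R // B ≤ q.asIdeal})).cons
              ⟨⟨p, hp⟩, hBp⟩ (by exact hpm)
          have := hchain s
          rw [show s.length = 1 from rfl] at this
          simp at this
        obtain ⟨N, hN0, hN⟩ := rad_case B hB hprime
        exact ⟨N, hN0, hN.trans le_sup_left⟩
  | succ δ ih =>
      intro B hchain
      by_cases hB : B = ⊤
      · exact ⟨∅, by simp, by simp, 1, one_pos, by simp [hB]⟩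
      by_cases H : ∀ p : Ideal R, p.IsPrime → B ≤ p → p = maximalIdeal R
      · obtain ⟨N, hN0, hN⟩ := rad_case B hB H
        exact ⟨∅, by simp, by simp, N, hN0, hN.trans le_sup_left⟩
      push_neg at H
      obtain ⟨p0, hp0prime, hBp0, hp0ne⟩ := H
      have hmnotmin : maximalIdeal R ∉ B.minimalPrimes := fun hm =>
        hp0ne (le_antisymm (le_maximalIdeal hp0prime.ne_top)
          (hm.2 ⟨hp0prime, hBp0⟩ (le_maximalIdeal hp0prime.ne_top)))
      have hfin : B.minimalPrimes.Finite := by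
        rw [Ideal.minimalPrimes_eq_comap]
        exact (minimalPrimes.finite_of_isNoetherianRing (R ⧸ B)).image _
      have havoid : ∃ x ∈ maximalIdeal R, ∀ p ∈ B.minimalPrimes, x ∉ p := by
        by_contra hcon
        push_neg at hcon
        have hsub : ((maximalIdeal R : Ideal R) : Set R) ⊆
            ⋃ p ∈ (hfin.toFinset : Set (Ideal R)), ↑(id p : Ideal R) := by
          intro y hy
          obtain ⟨p, hp, hyp⟩ := hcon y hy
          exact Set.mem_biUnion (hfin.mem_toFinset.mpr hp) hyp
        have hp' : ∀ i ∈ hfin.toFinset, i ≠ ⊤ → i ≠ ⊤ → (id i : Ideal R).IsPrime := by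
          intro i hi _ _
          exact (hfin.mem_toFinset.mp hi).1.1
        obtain ⟨p, hps, hmp⟩ := (Ideal.subset_union_prime (⊤ : Ideal R) ⊤ hp').mp hsub
        have hpmin := hfin.mem_toFinset.mp hps
        have : p = maximalIdeal R :=
          le_antisymm (le_maximalIdeal hpmin.1.1.ne_top) hmp
        exact hmnotmin (this ▸ hpmin)
      obtain ⟨x, hxm, hxp⟩ := havoid
      have hchain' : ∀ s : LTSeries {p : PrimeSpectrum R // B ⊔ Ideal.span {x} ≤ p.asIdeal},
          (s.length : ℕ∞) ≤ δ := by
        intro s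
        have hBh : B ≤ s.head.1.asIdeal := le_sup_left.trans s.head.2
        haveI : s.head.1.asIdeal.IsPrime := s.head.1.2
        obtain ⟨q, hqmin, hqle⟩ := Ideal.exists_minimalPrimes_le hBh
        have hqprime : q.IsPrime := hqmin.1.1
        have hxhead : x ∈ s.head.1.asIdeal :=
          (le_sup_right.trans s.head.2) (Ideal.mem_span_singleton_self x)
        have hqlt : q < s.head.1.asIdeal :=
          lt_of_le_of_ne hqle (fun h => hxp q hqmin (h ▸ hxhead))
        let incl : {p : PrimeSpectrum R // B ⊔ Ideal.span {x} ≤ p.asIdeal} →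
            {p : PrimeSpectrum R // B ≤ p.asIdeal} := fun p => ⟨p.1, le_sup_left.trans p.2⟩
        have hincl : StrictMono incl := fun a b h => h
        have hlt : (⟨⟨q, hqprime⟩, hqmin.1.2⟩ : {p : PrimeSpectrum R // B ≤ p.asIdeal}) <
            (s.map incl hincl).head := by
          show (⟨⟨q, hqprime⟩, hqmin.1.2⟩ : {p : PrimeSpectrum R // B ≤ p.asIdeal}) < incl s.head
          have : (⟨q, hqprime⟩ : PrimeSpectrum R) < s.head.1 := by
            refine lt_of_le_of_ne ((PrimeSpectrum.asIdeal_le_asIdeal _ _).mp hqle) ?_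
            intro h
            exact hqlt.ne (congrArg PrimeSpectrum.asIdeal h)
          exact this
        let s' := (s.map incl hincl).cons ⟨⟨q, hqprime⟩, hqmin.1.2⟩ hlt
        have hlen := hchain s'
        have : s'.length = s.length + 1 := by show 0 + s.length + 1 = s.length + 1; omega
        rw [this] at hlen
        have hnat : s.length + 1 ≤ δ + 1 := by exact_mod_cast hlen
        exact_mod_cast Nat.lt_succ_iff.mp (Nat.lt_succ_of_le (by omega))
      obtain ⟨F', hcard, hFm, N, hN0, hN⟩ := ih (B ⊔ Ideal.span {x}) hchain'
      refine ⟨insert x F', (Finset.card_insert_le _ _).trans (by omega), ?_, N, hN0, ?_⟩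
      · intro y hy
        rcases Finset.mem_insert.mp hy with rfl | hy
        exacts [hxm, hFm y hy]
      · rw [Finset.coe_insert, Ideal.span_insert, ← sup_assoc]
        exact hN

end Primes

section Simple

variable {R : Type*} [CommRing R] [IsLocalRing R]

open IsLocalRing

lemma submodule_quot_max_eq (W : Submodule R (R ⧸ maximalIdeal R)) : W = ⊥ ∨ W = ⊤ := by
  by_cases hW : W = ⊥
  · exact Or.inl hW
  · refine Or.inr ?_
    obtain ⟨w, hwW, hw0⟩ := Submodule.exists_mem_ne_zero_of_ne_bot hW
    obtain ⟨u, rfl⟩ := Submodule.Quotient.mk_surjective _ w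
    have hu : u ∉ maximalIdeal R := by
      intro hu
      exact hw0 ((Submodule.Quotient.mk_eq_zero _).mpr hu)
    obtain ⟨v, hv⟩ := IsLocalRing.notMem_maximalIdeal.mp hu
    rw [eq_top_iff]
    intro z _
    obtain ⟨y, rfl⟩ := Submodule.Quotient.mk_surjective _ z
    have : (y * ↑v⁻¹) • Submodule.Quotient.mk (p := maximalIdeal R) u = Submodule.Quotient.mk y := by
      rw [← Submodule.Quotient.mk_smul, smul_eq_mul]
      congr 1
      calc y * ↑v⁻¹ * u = y * (↑v⁻¹ * ↑v) := by rw [hv]; ring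
      _ = y := by rw [Units.inv_mul, mul_one]
    rw [← this]
    exact Submodule.smul_mem _ _ hwW

lemma len_quot_maximal : len R (R ⧸ maximalIdeal R) ≤ 1 := by
  rw [len_le_iff]
  intro p
  by_contra hcon
  push_neg at hcon
  have h2 : 2 ≤ p.length := by exact_mod_cast hcon
  have h01 : p.toFun ⟨0, by omega⟩ < p.toFun ⟨1, by omega⟩ := p.strictMono (Fin.mk_lt_mk.mpr (by omega))
  have h12 : p.toFun ⟨1, by omega⟩ < p.toFun ⟨2, by omega⟩ := p.strictMono (Fin.mk_lt_mk.mpr (by omega))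
  rcases submodule_quot_max_eq (p.toFun ⟨1, by omega⟩) with h | h
  · rw [h] at h01; exact absurd h01 (by simp)
  · rw [h] at h12; exact absurd h12 (by simp [not_top_lt])

end Simple

/-- Length of `M ⧸ N` in `ℕ∞`. -/
noncomputable def mlenE (R : Type*) [CommRing R] (M : Type*) [AddCommGroup M] [Module R M]
    (N : Submodule R M) : ℕ∞ :=
  (Order.krullDim (Submodule R (M ⧸ N))).unbotD 0

/-- Uniform bound
`length(M/(I^{[q]} + J^{[qq']})M) ≤ D · q'^{dim R/I} · q^{dim M}`. -/
theorem stmt7 {R : Type*} [CommRing R] [IsNoetherianRing R] [IsLocalRing R]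
    (p : ℕ) (hp : p.Prime) [CharP R p]
    (J : Ideal R) (hJ : J.radical = maximalIdeal R) (I : Ideal R)
    (t : ℕ) (ht : ringKrullDim (R ⧸ I) = t)
    (M : Type*) [AddCommGroup M] [Module R M] [Module.Finite R M]
    (dM : ℕ) (hdM : ringKrullDim (R ⧸ (⊤ : Submodule R M).annihilator) = dM) :
    ∃ D : ℕ, ∀ e e' : ℕ,
      mlenE R M ((fpow I (p ^ e) ⊔ fpow J (p ^ e * p ^ e')) • (⊤ : Submodule R M)) ≤
        (D * (p ^ e') ^ t * (p ^ e) ^ dM : ℕ) := by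
  classical
  set A : Ideal R := (⊤ : Submodule R M).annihilator with hA
  -- systems of parameters
  obtain ⟨FI, hFIcard, hFIm, N1, hN1pos, hN1⟩ := sop t I (chains_over_of_dim I t (le_of_eq ht))
  obtain ⟨FA, hFAcard, hFAm, N2, hN2pos, hN2⟩ := sop dM A (chains_over_of_dim A dM (le_of_eq hdM))
  -- uniform exponent c with x^c ∈ J for x ∈ FI
  have hFIJ : ∀ x ∈ FI, ∃ n, 0 < n ∧ x ^ n ∈ J := by
    intro x hx
    have : x ∈ J.radical := by rw [hJ]; exact hFIm x hx
    obtain ⟨n, hn⟩ := this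
    rcases Nat.eq_zero_or_pos n with rfl | hpos
    · rw [pow_zero] at hn
      have hJtop : J = ⊤ := (Ideal.eq_top_iff_one J).mpr hn
      exact ⟨1, one_pos, by rw [hJtop]; trivial⟩
    · exact ⟨n, hpos, hn⟩
  choose! f hf0 hfJ using hFIJ
  set c : ℕ := max 1 (FI.sup f) with hc
  have hc1 : 1 ≤ c := le_max_left _ _
  have hcJ : ∀ x ∈ FI, x ^ c ∈ J := by
    intro x hx
    have hle : f x ≤ c := le_trans (Finset.le_sup hx) (le_max_right _ _)
    have : x ^ c = x ^ (c - f x) * x ^ (f x) := by rw [← pow_add]; congr 1; omega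
    rw [this]
    exact J.mul_mem_left _ (hfJ x hx)
  -- generators of m and of M
  obtain ⟨G, hG⟩ : ∃ G : Finset R, Ideal.span (G : Set R) = maximalIdeal R :=
    IsNoetherian.noetherian (maximalIdeal R)
  obtain ⟨GM, hGM⟩ : ∃ GM : Finset M, Submodule.span R (GM : Set M) = ⊤ :=
    Module.Finite.fg_top (R := R) (M := M)
  refine ⟨GM.card * c ^ t * N1 ^ dM * N2 ^ G.card, ?_⟩
  intro e e'
  set q : ℕ := p ^ e with hq
  set q' : ℕ := p ^ e' with hq'
  have hq1 : 1 ≤ q := Nat.one_le_pow _ _ hp.pos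
  have hq'1 : 1 ≤ q' := Nat.one_le_pow _ _ hp.pos
  set a : Ideal R := fpow I q ⊔ fpow J (q * q') with ha
  -- Step 0 : reduce to cyclic case
  have step0 : mlenE R M (a • ⊤) ≤ (GM.card : ℕ∞) * len R (R ⧸ (a ⊔ A)) := by
    refine fingen_len_le GM.card (M ⧸ (a • (⊤ : Submodule R M)))
      (GM.image (a • (⊤ : Submodule R M)).mkQ) (a ⊔ A) _ ?_ ?_ ?_ le_rfl
    · exact le_trans (Finset.card_image_le) le_rfl
    · intro x hx r hr
      obtain ⟨y, _, rfl⟩ := Finset.mem_image.mp hx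
      obtain ⟨ra, hra, rA, hrA, rfl⟩ := Submodule.mem_sup.mp hr
      rw [Submodule.mkQ_apply, ← Submodule.Quotient.mk_smul, Submodule.Quotient.mk_eq_zero]
      have h1 : (ra + rA) • y = ra • y + rA • y := add_smul ra rA y
      have h2 : rA • y = 0 := Submodule.mem_annihilator.mp hrA y Submodule.mem_top
      rw [h1, h2, add_zero]
      exact Submodule.smul_mem_smul hra Submodule.mem_top
    · rw [Finset.coe_image, ← Submodule.map_span, hGM, Submodule.map_top, Submodule.range_mkQ]
  -- Step 1 : replace the J-part by powers of FI
  set n1 : ℕ := c * q' with hn1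
  set E1 : Ideal R := fpow I q ⊔ A with hE1
  have step1 : len R (R ⧸ (a ⊔ A)) ≤
      len R (R ⧸ (E1 ⊔ Ideal.span ((fun x => x ^ (q * n1)) '' (FI : Set R)))) := by
    refine len_quot_mono ?_
    refine sup_le (sup_le (le_sup_of_le_left le_sup_left) le_sup_right)
      (le_sup_of_le_left (le_sup_of_le_right ?_))
    rw [Ideal.span_le]
    rintro z ⟨x, hx, rfl⟩
    have hmem : (x ^ c) ^ (q * q') ∈ fpow J (q * q') :=
      Ideal.subset_span ⟨x ^ c, hcJ x hx, rfl⟩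
    rw [← pow_mul] at hmem
    have hexp : c * (q * q') = q * n1 := by rw [hn1]; ring
    rw [hexp] at hmem
    exact hmem
  -- Step 2 : key_fin on FI.image (·^q)
  have himg2 : ((fun x => x ^ n1) '' ((FI.image fun x => x ^ q : Finset R) : Set R))
      = (fun x => x ^ (q * n1)) '' (FI : Set R) := by
    rw [Finset.coe_image, Set.image_image]
    apply Set.image_congr
    intro x _
    rw [← pow_mul]
  have step2 : len R (R ⧸ (E1 ⊔ Ideal.span ((fun x => x ^ (q * n1)) '' (FI : Set R)))) ≤
      ((n1 : ℕ∞) ^ t) *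
        len R (R ⧸ (E1 ⊔ Ideal.span ((fun x => x ^ q) '' (FI : Set R)))) := by
    have hkf := key_fin n1 (FI.image fun x => x ^ q) E1
      (len R (R ⧸ (E1 ⊔ Ideal.span ((fun x => x ^ q) '' (FI : Set R)))))
      (by rw [Finset.coe_image])
    rw [himg2] at hkf
    refine hkf.trans (mul_le_mul_left ?_ _)
    have hcard : (FI.image fun x => x ^ q).card ≤ t := le_trans Finset.card_image_le hFIcard
    have h1n1 : (1 : ℕ∞) ≤ (n1 : ℕ∞) := by
      have : (1 : ℕ) ≤ n1 := Nat.one_le_iff_ne_zero.mpr (by positivity)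
      exact_mod_cast this
    exact pow_le_pow_right₀ h1n1 hcard
  -- Step 3 : pass to the system of parameters for A
  have step3 : len R (R ⧸ (E1 ⊔ Ideal.span ((fun x => x ^ q) '' (FI : Set R)))) ≤
      len R (R ⧸ (A ⊔ Ideal.span ((fun z => z ^ (N1 * q)) '' (FA : Set R)))) := by
    refine len_quot_mono ?_
    refine sup_le (le_sup_of_le_left le_sup_right) ?_
    rw [Ideal.span_le]
    rintro z ⟨x, hx, rfl⟩
    have hxm : x ∈ maximalIdeal R := hFAm x hx
    have h1 : x ^ N1 ∈ I ⊔ Ideal.span (FI : Set R) := hN1 (Ideal.pow_mem_pow hxm N1)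
    have h2 : Ideal.span ((I : Set R) ∪ (FI : Set R)) = I ⊔ Ideal.span (FI : Set R) := by
      rw [Ideal.span_union, Ideal.span_eq]
    have h3 : x ^ (N1 * q) ∈ Ideal.span ((fun y => y ^ q) '' ((I : Set R) ∪ (FI : Set R))) := by
      rw [pow_mul, hq]
      exact frob_pow_mem hp e _ (h2 ▸ h1)
    have h4 : Ideal.span ((fun y => y ^ q) '' ((I : Set R) ∪ (FI : Set R))) ≤
        E1 ⊔ Ideal.span ((fun y => y ^ q) '' (FI : Set R)) := by
      rw [Set.image_union, Ideal.span_union]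
      exact sup_le (le_sup_of_le_left le_sup_left) le_sup_right
    exact h4 h3
  -- Step 4 : key_fin on FA
  have step4 : len R (R ⧸ (A ⊔ Ideal.span ((fun z => z ^ (N1 * q)) '' (FA : Set R)))) ≤
      ((N1 * q : ℕ) : ℕ∞) ^ dM * len R (R ⧸ (A ⊔ Ideal.span (FA : Set R))) := by
    have hkf := key_fin (N1 * q) FA A (len R (R ⧸ (A ⊔ Ideal.span (FA : Set R)))) le_rfl
    refine hkf.trans (mul_le_mul_left ?_ _)
    have h1n : (1 : ℕ∞) ≤ ((N1 * q : ℕ) : ℕ∞) := by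
      have : (1 : ℕ) ≤ N1 * q := Nat.mul_pos hN1pos hq1
      exact_mod_cast this
    exact pow_le_pow_right₀ h1n hFAcard
  -- Step 5 : the base length is finite
  have step5 : len R (R ⧸ (A ⊔ Ideal.span (FA : Set R))) ≤ (N2 : ℕ∞) ^ G.card * 1 := by
    have h5a : len R (R ⧸ (A ⊔ Ideal.span (FA : Set R))) ≤
        len R (R ⧸ ((⊥ : Ideal R) ⊔ Ideal.span ((fun g => g ^ N2) '' (G : Set R)))) := by
      refine len_quot_mono (sup_le bot_le ?_)
      rw [Ideal.span_le]
      rintro z ⟨g, hg, rfl⟩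
      have hgm : g ∈ maximalIdeal R := hG ▸ Ideal.subset_span hg
      exact hN2 (Ideal.pow_mem_pow hgm N2)
    refine h5a.trans ?_
    refine key_fin N2 G ⊥ 1 ?_
    rw [bot_sup_eq, hG]
    exact len_quot_maximal
  -- assemble
  have chain : len R (R ⧸ (a ⊔ A)) ≤
      (n1 : ℕ∞) ^ t * (((N1 * q : ℕ) : ℕ∞) ^ dM * ((N2 : ℕ∞) ^ G.card * 1)) :=
    step1.trans (step2.trans (mul_le_mul_right
      (step3.trans (step4.trans (mul_le_mul_right step5 _))) _))
  have total : mlenE R M (a • ⊤) ≤ (GM.card : ℕ∞) *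
      ((n1 : ℕ∞) ^ t * (((N1 * q : ℕ) : ℕ∞) ^ dM * ((N2 : ℕ∞) ^ G.card * 1))) :=
    step0.trans (mul_le_mul_right chain _)
  have hcast : (GM.card : ℕ∞) *
      ((n1 : ℕ∞) ^ t * (((N1 * q : ℕ) : ℕ∞) ^ dM * ((N2 : ℕ∞) ^ G.card * 1)))
      = ((GM.card * (n1 ^ t * ((N1 * q) ^ dM * (N2 ^ G.card * 1))) : ℕ) : ℕ∞) := by
    push_cast
    ring
  have hnat : GM.card * (n1 ^ t * ((N1 * q) ^ dM * (N2 ^ G.card * 1)))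
      = GM.card * c ^ t * N1 ^ dM * N2 ^ G.card * q' ^ t * q ^ dM := by
    rw [hn1, mul_pow, mul_pow]
    ring
  rw [hcast, hnat] at total
  exact total
end
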